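/- The minimal DFA for the winning set of the language of binary words with exactly n occurrences of 1 has exactly n³/6 + n² + 11n/6 + 2 states. -/

import Mathlib

/-- Left derivative: `lderiv s T = {v | s :: v ∈ T}`. -/
def lderiv (s : Bool) (T : Set (List Bool)) : Set (List Bool) := {v | s :: v ∈ T}

/-- Winning-set membership. Turn orders are lists over `Bool` with
`false` = A (Alice) and `true` = B (Bob), so that `A < B`. -/
def winW : List Bool → Set (List Bool) → Prop
  | [], T => [] ∈ T
  | (false :: v), T => winW v (lderiv false T) ∨ winW v (lderiv true T)
  | (true :: v), T => winW v (lderiv false T) ∧ winW v (lderiv true T)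

/-- The winning set of a binary language. -/
def winningSet (T : Set (List Bool)) : Set (List Bool) := {w | winW w T}

/-- max suffix deficit (#true - #false), at least 0 -/
def dm : List Bool → ℤ
  | [] => 0
  | x :: v => max ((((x :: v).count true : ℤ)) - ((x :: v).count false : ℤ)) (dm v)

lemma dm_nil : dm [] = 0 := rfl
lemma dm_cons (x : Bool) (v : List Bool) :
    dm (x :: v) = max ((((x :: v).count true : ℤ)) - ((x :: v).count false : ℤ)) (dm v) := rfl

lemma dm_nonneg (v : List Bool) : 0 ≤ dm v := by
  induction v with
  | nil => simp [dm]
  | cons x v ih => rw [dm_cons]; exact le_trans ih (le_max_right _ _)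

lemma dm_ge (v : List Bool) : ((v.count true : ℤ)) - (v.count false : ℤ) ≤ dm v := by
  cases v with
  | nil => simp [dm]
  | cons x v => rw [dm_cons]; exact le_max_left _ _

lemma dm_append (w v : List Bool) :
    dm (w ++ v) = max (dm w + (((v.count true : ℤ)) - (v.count false : ℤ))) (dm v) := by
  induction w with
  | nil => simp [dm, max_eq_right (dm_ge v)]
  | cons a w ih =>
      rw [List.cons_append, dm_cons, ih, dm_cons]
      rw [← max_assoc]
      congr 1
      rw [← max_add_add_right]
      congr 1
      simp only [List.count_cons, List.count_append]
      push_cast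
      ring

lemma dm_le_ct (v : List Bool) : dm v ≤ (v.count true : ℤ) := by
  induction v with
  | nil => simp [dm]
  | cons x v ih =>
      rw [dm_cons, max_le_iff]
      refine ⟨by simp [List.count_cons]; omega, ?_⟩
      have : (v.count true : ℤ) ≤ ((x :: v).count true : ℤ) := by
        simp [List.count_cons]; omega
      omega

def Lang (k : ℕ) : Set (List Bool) := {v | v.count true = k}

lemma lderiv_false_Lang (k : ℕ) : lderiv false (Lang k) = Lang k := by
  ext v; simp [lderiv, Lang, List.count_cons]

lemma lderiv_true_Lang_succ (k : ℕ) : lderiv true (Lang (k+1)) = Lang k := by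
  ext v; simp [lderiv, Lang, List.count_cons]

lemma lderiv_true_Lang_zero : lderiv true (Lang 0) = ∅ := by
  ext v; simp [lderiv, Lang, List.count_cons]

lemma lderiv_empty (s : Bool) : lderiv s (∅ : Set (List Bool)) = ∅ := by
  ext v; simp [lderiv]

lemma winW_empty (v : List Bool) : ¬ winW v (∅ : Set (List Bool)) := by
  induction v with
  | nil => simp [winW]
  | cons x v ih => cases x <;> simp [winW, lderiv_empty] <;> exact ih

lemma winW_Lang (v : List Bool) : ∀ k, winW v (Lang k) ↔
    ((k : ℤ) ≤ v.count false ∧ v.count true ≤ k ∧ dm v ≤ 0) := by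
  induction v with
  | nil => intro k; simp [winW, Lang, dm]; omega
  | cons x v ih =>
      intro k
      have hnn := dm_nonneg v
      have hge := dm_ge v
      cases x with
      | false =>
          cases k with
          | zero =>
              simp only [winW, lderiv_false_Lang, lderiv_true_Lang_zero,
                iff_false_intro (winW_empty v), or_false, ih, dm_cons, max_le_iff,
                List.count_cons]
              push_cast
              try simp
              try omega
          | succ k =>
              simp only [winW, lderiv_false_Lang, lderiv_true_Lang_succ, ih, dm_cons,
                max_le_iff, List.count_cons]
              push_cast
              try simp
              try omega
      | true =>
          cases k with
          | zero =>
              simp only [winW, lderiv_false_Lang, lderiv_true_Lang_zero,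
                iff_false_intro (winW_empty v), and_false, false_iff, not_and, not_le]
              intro _ h
              simp [List.count_cons] at h
          | succ k =>
              simp only [winW, lderiv_false_Lang, lderiv_true_Lang_succ, ih, dm_cons,
                max_le_iff, List.count_cons]
              push_cast
              try simp
              try omega

/-- The language `S n` (explicit form of the winning set). -/
def SL (n : ℕ) : Set (List Bool) :=
  {w | (n : ℤ) ≤ w.count false ∧ w.count true ≤ n ∧ dm w ≤ 0}

lemma winningSet_eq (n : ℕ) : winningSet (Lang n) = SL n := by
  ext w
  exact winW_Lang w n

/-- Canonical residual languages. -/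
def CL (p q d : ℕ) : Set (List Bool) :=
  {v | p ≤ v.count false ∧ v.count true ≤ q ∧ dm v ≤ 0 ∧
    (d : ℤ) + v.count true ≤ v.count false}

/-- left quotient of `SL n` -/
def quotL (n : ℕ) (w : List Bool) : Set (List Bool) := {v | w ++ v ∈ SL n}

lemma quotL_empty {n : ℕ} {w : List Bool} (h : n < w.count true) : quotL n w = ∅ := by
  ext v
  simp only [quotL, SL, Set.mem_setOf_eq, List.count_append, Set.mem_empty_iff_false,
    iff_false, not_and]
  intro _ h2
  omega

lemma quotL_formula {n : ℕ} {w : List Bool} (h : w.count true ≤ n) :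
    quotL n w = CL (n - w.count false) (n - w.count true) (dm w).toNat := by
  ext v
  have h1 := dm_nonneg w
  have h2 := dm_ge w
  have h3 := dm_nonneg v
  have h4 := dm_ge v
  have h5 : ((dm w).toNat : ℤ) = dm w := Int.toNat_of_nonneg h1
  simp only [quotL, SL, CL, Set.mem_setOf_eq, List.count_append, dm_append, max_le_iff]
  push_cast
  omega

/-- words with `t` trues, `f` falses (for `t ≤ f`), all suffixes balanced -/
def mk : ℕ → ℕ → List Bool
  | f, 0 => List.replicate f false
  | f, t+1 => true :: false :: mk (f-1) t

lemma ct_mk (f t : ℕ) : (mk f t).count true = t := by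
  induction t generalizing f with
  | zero => simp [mk, List.count_replicate]
  | succ t ih => simp [mk, List.count_cons, ih]

lemma cf_mk (f t : ℕ) (h : t ≤ f) : (mk f t).count false = f := by
  induction t generalizing f with
  | zero => simp [mk]
  | succ t ih =>
      have : (mk (f-1) t).count false = f - 1 := ih (f-1) (by omega)
      simp [mk, List.count_cons, this]
      omega

lemma dm_cons_le (x : Bool) (v : List Bool)
    (h1 : (((x :: v).count true : ℤ)) ≤ ((x :: v).count false : ℤ)) (h2 : dm v ≤ 0) :
    dm (x :: v) ≤ 0 := by
  rw [dm_cons]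
  exact max_le (by omega) h2

lemma dm_replicate_false (f : ℕ) : dm (List.replicate f false) = 0 := by
  induction f with
  | zero => simp [dm]
  | succ f ih =>
      refine le_antisymm ?_ (dm_nonneg _)
      rw [List.replicate_succ]
      apply dm_cons_le
      · simp [List.count_cons, List.count_replicate]
        omega
      · rw [ih]

lemma dm_mk (f t : ℕ) (h : t ≤ f) : dm (mk f t) = 0 := by
  induction t generalizing f with
  | zero => simpa [mk] using dm_replicate_false f
  | succ t ih =>
      have hrest : dm (mk (f-1) t) = 0 := ih (f-1) (by omega)
      refine le_antisymm ?_ (dm_nonneg _)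
      rw [show mk f (t+1) = true :: false :: mk (f-1) t from rfl]
      apply dm_cons_le
      · simp [List.count_cons, ct_mk, cf_mk (f-1) t (by omega)]
        push_cast
        omega
      apply dm_cons_le
      · simp [List.count_cons, ct_mk, cf_mk (f-1) t (by omega)]
        push_cast
        omega
      · exact le_of_eq hrest

lemma dm_replicate_true (d : ℕ) : dm (List.replicate d true) = d := by
  induction d with
  | zero => simp [dm]
  | succ d ih =>
      rw [List.replicate_succ, dm_cons, ih]
      simp [List.count_cons, List.count_replicate]
      all_goals omega

lemma mk_mem_CL {p q d f t : ℕ} (hft : t ≤ f) (h1 : p ≤ f) (h2 : t ≤ q) (h3 : d + t ≤ f) :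
    mk f t ∈ CL p q d := by
  simp only [CL, Set.mem_setOf_eq, ct_mk, cf_mk f t hft, dm_mk f t hft]
  push_cast
  refine ⟨h1, h2, by simp, by omega⟩

lemma CL_canon1 {p q d : ℕ} (h : d + q ≤ p) : CL p q d = CL p q (p - q) := by
  ext v
  simp only [CL, Set.mem_setOf_eq]
  constructor <;> rintro ⟨a, b, c, e⟩ <;> exact ⟨a, b, c, by push_cast at *; omega⟩

lemma CL_canon2 {p q d : ℕ} (h : p ≤ d) : CL p q d = CL d q d := by
  ext v
  simp only [CL, Set.mem_setOf_eq]
  constructor <;> rintro ⟨a, b, c, e⟩ <;> refine ⟨by push_cast at *; omega, b, c, e⟩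

lemma CL_inj {p q d p' q' d' : ℕ} (hc : d ≤ p ∧ p ≤ d + q) (hc' : d' ≤ p' ∧ p' ≤ d' + q')
    (h : CL p q d = CL p' q' d') : p = p' ∧ q = q' ∧ d = d' := by
  have A : mk (d+q) q ∈ CL p' q' d' := h ▸ mk_mem_CL (by omega) (by omega) le_rfl (by omega)
  have B : mk (d'+q') q' ∈ CL p q d := h.symm ▸ mk_mem_CL (by omega) (by omega) le_rfl (by omega)
  have C : mk p 0 ∈ CL p' q' d' := h ▸ mk_mem_CL (by omega) le_rfl (by omega) (by omega)
  have D : mk p' 0 ∈ CL p q d := h.symm ▸ mk_mem_CL (by omega) le_rfl (by omega) (by omega)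
  simp only [CL, Set.mem_setOf_eq, ct_mk, cf_mk _ _ (by omega : q ≤ d + q),
    cf_mk _ _ (by omega : q' ≤ d' + q')] at A B
  simp only [CL, Set.mem_setOf_eq, ct_mk, cf_mk _ _ (Nat.zero_le _)] at C D
  push_cast at A B C D
  omega

lemma CL_nonempty {p q d : ℕ} (hc : p ≤ d + q) : (CL p q d).Nonempty :=
  ⟨mk (d+q) q, mk_mem_CL (by omega) (by omega) le_rfl (by omega)⟩

lemma quotL_reach {n p q d : ℕ} (hd : d ≤ p) (hpq : p ≤ d + q) (hqn : d + q ≤ n) :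
    quotL n (mk (n-p) ((n-q) - d) ++ List.replicate d true) = CL p q d := by
  have hple : p ≤ n := by omega
  have hta : (n-q) - d ≤ n - p := by omega
  have hct : (mk (n-p) ((n-q)-d) ++ List.replicate d true).count true = n - q := by
    simp [List.count_append, ct_mk, List.count_replicate]
    omega
  have hcf : (mk (n-p) ((n-q)-d) ++ List.replicate d true).count false = n - p := by
    simp [List.count_append, cf_mk _ _ hta, List.count_replicate]
  have hdm : dm (mk (n-p) ((n-q)-d) ++ List.replicate d true) = d := by
    rw [dm_append, dm_mk _ _ hta, dm_replicate_true]
    simp [List.count_replicate]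
    all_goals omega
  rw [quotL_formula (by rw [hct]; omega :
    (mk (n-p) ((n-q)-d) ++ List.replicate d true).count true ≤ n)]
  rw [hct, hcf, hdm]
  have e1 : n - (n - p) = p := by omega
  have e2 : n - (n - q) = q := by omega
  have e3 : ((d:ℤ)).toNat = d := Int.toNat_natCast d
  rw [e1, e2, e3]

/-- States: left quotients of `T`. -/
def QuotSt (T : Set (List Bool)) := {U : Set (List Bool) // ∃ w : List Bool, {v | w ++ v ∈ T} = U}

def quotDFA (T : Set (List Bool)) : DFA Bool (QuotSt T) where
  step := fun U s => ⟨lderiv s U.1, by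
    obtain ⟨w, hw⟩ := U.2
    refine ⟨w ++ [s], ?_⟩
    ext v
    simp only [lderiv, ← hw, Set.mem_setOf_eq, List.append_assoc, List.cons_append,
      List.nil_append]⟩
  start := ⟨T, [], by simp⟩
  accept := {U | [] ∈ U.1}

lemma quotDFA_eval (T : Set (List Bool)) (w : List Bool) :
    ((quotDFA T).eval w).1 = {v | w ++ v ∈ T} := by
  induction w using List.reverseRecOn with
  | nil => simp [DFA.eval_nil, quotDFA]
  | append_singleton w s ih =>
      rw [DFA.eval_append_singleton]
      show lderiv s ((quotDFA T).eval w).1 = _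
      rw [ih]
      ext v
      simp [lderiv, List.append_assoc]

lemma quotDFA_accepts (T : Set (List Bool)) : (quotDFA T).accepts = T := by
  ext w
  rw [DFA.mem_accepts]
  show (quotDFA T).eval w ∈ {U : QuotSt T | [] ∈ U.1} ↔ _
  simp only [Set.mem_setOf_eq, quotDFA_eval, List.append_nil]
  exact Iff.rfl

lemma quot_card_le (T : Set (List Bool)) [Fintype (QuotSt T)] (σ' : Type) [Fintype σ']
    (M' : DFA Bool σ') (hM' : M'.accepts = T) :
    Fintype.card (QuotSt T) ≤ Fintype.card σ' := by
  have key : ∀ U : QuotSt T, ∃ w : List Bool, {v | w ++ v ∈ T} = U.1 := fun U => U.2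
  refine Fintype.card_le_of_injective (fun U => M'.eval (key U).choose) ?_
  intro U1 U2 h
  apply Subtype.ext
  rw [← (key U1).choose_spec, ← (key U2).choose_spec]
  ext v
  have e1 : ∀ w : List Bool, (w ++ v ∈ T ↔ M'.evalFrom (M'.eval w) v ∈ M'.accept) := by
    intro w
    rw [← hM']
    change w ++ v ∈ M'.accepts ↔ _
    rw [DFA.mem_accepts]
    unfold DFA.eval
    rw [DFA.evalFrom_of_append]
  simp only [Set.mem_setOf_eq, e1, h]

/-- Index type for canonical states: `x ≤ y ≤ z ≤ n` encoding `(d,p,d+q)`. -/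
def Idx (n : ℕ) := Σ z : Fin (n+1), Σ y : Fin (z.1+1), Fin (y.1+1)

instance (n : ℕ) : Fintype (Idx n) := by unfold Idx; infer_instance

noncomputable def dec (n : ℕ) : Option (Idx n) → QuotSt (SL n)
  | none => ⟨∅, List.replicate (n+1) true, by
      rw [show {v | List.replicate (n+1) true ++ v ∈ SL n} = quotL n (List.replicate (n+1) true)
        from rfl, quotL_empty (by simp [List.count_replicate])]⟩
  | some ⟨z, y, x⟩ => ⟨CL y.1 (z.1 - x.1) x.1,
      mk (n - y.1) ((n - (z.1 - x.1)) - x.1) ++ List.replicate x.1 true, by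
      have h1 : x.1 ≤ y.1 := by omega
      have h2 : y.1 ≤ z.1 := by omega
      have h3 : z.1 ≤ n := by omega
      exact quotL_reach h1 (by omega) (by omega)⟩

lemma dec_injective (n : ℕ) : Function.Injective (dec n) := by
  intro a b h
  match a, b with
  | none, none => rfl
  | none, some ⟨z, y, x⟩ =>
      exfalso
      have h' : (∅ : Set (List Bool)) = CL y.1 (z.1 - x.1) x.1 := congrArg Subtype.val h
      obtain ⟨v, hv⟩ := CL_nonempty (p := y.1) (q := z.1 - x.1) (d := x.1) (by omega)
      rw [← h'] at hv
      exact hv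
  | some ⟨z, y, x⟩, none =>
      exfalso
      have h' : CL y.1 (z.1 - x.1) x.1 = (∅ : Set (List Bool)) := congrArg Subtype.val h
      obtain ⟨v, hv⟩ := CL_nonempty (p := y.1) (q := z.1 - x.1) (d := x.1) (by omega)
      rw [h'] at hv
      exact hv
  | some ⟨z, y, x⟩, some ⟨z', y', x'⟩ =>
      have h' : CL y.1 (z.1 - x.1) x.1 = CL y'.1 (z'.1 - x'.1) x'.1 := congrArg Subtype.val h
      have hx : x.1 ≤ y.1 := by omega
      have hy : y.1 ≤ z.1 := by omega
      have hx' : x'.1 ≤ y'.1 := by omega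
      have hy' : y'.1 ≤ z'.1 := by omega
      obtain ⟨hp, hq, hd⟩ := CL_inj ⟨hx, by omega⟩ ⟨hx', by omega⟩ h'
      have hz : z.1 = z'.1 := by omega
      have hyy : y.1 = y'.1 := by omega
      have hxx : x.1 = x'.1 := by omega
      congr 1
      rcases z with ⟨z, hzb⟩; rcases z' with ⟨z', hzb'⟩
      simp only at hz
      subst hz
      rcases y with ⟨y, hyb⟩; rcases y' with ⟨y', hyb'⟩
      simp only at hyy
      subst hyy
      rcases x with ⟨x, hxb⟩; rcases x' with ⟨x', hxb'⟩
      simp only at hxx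
      subst hxx
      rfl

lemma dec_surjective (n : ℕ) : Function.Surjective (dec n) := by
  rintro ⟨U, w, hw⟩
  have hq : quotL n w = U := hw
  by_cases hct : n < w.count true
  · refine ⟨none, Subtype.ext ?_⟩
    show (∅ : Set (List Bool)) = U
    rw [← hq, quotL_empty hct]
  · push_neg at hct
    set p0 := n - w.count false with hp0
    set q0 := n - w.count true with hq0
    set d0 := (dm w).toNat with hd0
    have hCL : quotL n w = CL p0 q0 d0 := quotL_formula hct
    have hd0le : d0 ≤ w.count true := by
      have := dm_le_ct w
      have h2 := dm_nonneg w
      omega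
    have hdq : d0 + q0 ≤ n := by omega
    have hp0n : p0 ≤ n := by omega
    by_cases hc1 : d0 + q0 ≤ p0
    · -- constant class: canonical (p0, q0, p0 - q0)
      have hq0p : q0 ≤ p0 := by omega
      refine ⟨some ⟨⟨p0, by omega⟩, ⟨p0, by show p0 < p0 + 1; omega⟩,
        ⟨p0 - q0, by show p0 - q0 < p0 + 1; omega⟩⟩, Subtype.ext ?_⟩
      show CL p0 (p0 - (p0 - q0)) (p0 - q0) = U
      rw [show p0 - (p0 - q0) = q0 by omega, ← CL_canon1 hc1, ← hCL, hq]
    · by_cases hc2 : p0 ≤ d0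
      · -- strictly increasing class: canonical (d0, q0, d0)
        refine ⟨some ⟨⟨d0 + q0, by omega⟩, ⟨d0, by show d0 < d0 + q0 + 1; omega⟩,
          ⟨d0, by show d0 < d0 + 1; omega⟩⟩, Subtype.ext ?_⟩
        show CL d0 (d0 + q0 - d0) d0 = U
        rw [show d0 + q0 - d0 = q0 by omega, ← CL_canon2 hc2, ← hCL, hq]
      · -- already canonical
        refine ⟨some ⟨⟨d0 + q0, by omega⟩, ⟨p0, by show p0 < d0 + q0 + 1; omega⟩,
          ⟨d0, by show d0 < p0 + 1; omega⟩⟩, Subtype.ext ?_⟩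
        show CL p0 (d0 + q0 - d0) d0 = U
        rw [show d0 + q0 - d0 = q0 by omega, ← hCL, hq]

noncomputable instance (n : ℕ) : Fintype (QuotSt (SL n)) :=
  Fintype.ofBijective (dec n) ⟨dec_injective n, dec_surjective n⟩

lemma sum1 (m : ℕ) : 2 * ∑ y ∈ Finset.range m, (y+1) = m * (m+1) := by
  induction m with
  | zero => simp
  | succ m ih => rw [Finset.sum_range_succ, Nat.mul_add, ih]; ring

lemma sum2 (m : ℕ) : 6 * ∑ z ∈ Finset.range m, (∑ y ∈ Finset.range (z+1), (y+1)) =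
    m * (m+1) * (m+2) := by
  induction m with
  | zero => simp
  | succ m ih =>
      rw [Finset.sum_range_succ, Nat.mul_add, ih]
      have h := sum1 (m+1)
      have h2 : 6 * ∑ y ∈ Finset.range (m+1), (y+1) = 3 * ((m+1) * (m+2)) := by
        rw [show (6:ℕ) * ∑ y ∈ Finset.range (m+1), (y+1) =
          3 * (2 * ∑ y ∈ Finset.range (m+1), (y+1)) by ring, h]
      rw [h2]
      ring

lemma card_Idx (n : ℕ) : 6 * Fintype.card (Idx n) = (n+1) * (n+2) * (n+3) := by
  have : Fintype.card (Idx n) = ∑ z ∈ Finset.range (n+1), (∑ y ∈ Finset.range (z+1), (y+1)) := by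
    rw [show Fintype.card (Idx n) = ∑ z : Fin (n+1), ∑ y : Fin (z.1+1), (y.1+1) by
      simp [Idx, Fintype.card_sigma]]
    rw [show (∑ z : Fin (n+1), ∑ y : Fin (z.1+1), (y.1+1)) =
        ∑ z : Fin (n+1), ∑ y ∈ Finset.range (z.1+1), (y+1) from
      Finset.sum_congr rfl fun z _ => Fin.sum_univ_eq_sum_range (fun y => y+1) (z.1+1)]
    exact Fin.sum_univ_eq_sum_range (fun z => ∑ y ∈ Finset.range (z+1), (y+1)) (n+1)
  rw [this]
  exact sum2 (n+1)

/-- the minimal DFA of the winning set of the language of words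
with exactly `n` ones has `n³/6 + n² + 11n/6 + 2` states (stated without
division: `6 · #states = n³ + 6n² + 11n + 12`). -/
theorem winningSet_exactly_n_ones_state_complexity (n : ℕ) :
    ∃ (σ : Type) (_ : Fintype σ) (M : DFA Bool σ),
      M.accepts = winningSet {v : List Bool | v.count true = n} ∧
      6 * Fintype.card σ = n^3 + 6*n^2 + 11*n + 12 ∧
      ∀ (σ' : Type) (_ : Fintype σ') (M' : DFA Bool σ'),
        M'.accepts = winningSet {v : List Bool | v.count true = n} →
          Fintype.card σ ≤ Fintype.card σ' := by
  have hW : winningSet {v : List Bool | v.count true = n} = SL n := winningSet_eq n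
  refine ⟨QuotSt (SL n), inferInstance, quotDFA (SL n), ?_, ?_, ?_⟩
  · rw [quotDFA_accepts, hW]
  · have hcard : Fintype.card (QuotSt (SL n)) = Fintype.card (Option (Idx n)) :=
      (Fintype.card_congr (Equiv.ofBijective (dec n) ⟨dec_injective n, dec_surjective n⟩)).symm
    rw [hcard, Fintype.card_option, Nat.mul_add, card_Idx n]
    ring
  · intro σ' _ M' hM'
    exact quot_card_le (SL n) σ' M' (by rw [hM', hW])
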